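/- Let χ be a complete C¹ vector field on ℝᵐ, and suppose V_K, V_E : ℝᵐ → ℝ≥0 are C¹ proper functions and α a class-𝒦∞ function satisfying: α(dist(z,K₀)) ≤ V_K(z) with V_K = 0 on K₀; α(dist(z,E)) ≤ V_E(z) with V_E = 0 on E; and L_χ V_K(z) ≤ −V_K(z), L_χ V_E(z) ≤ −V_E(z) for all z. Set v_E = sup{V_K(z) : dist(z,E) ≤ d̄} and μ = α(d̄)/(2 v_E) for some d̄ > 0. Then the set ℰ = {z : V_E(z) + μ V_K(z) < α(d̄)} contains closure(E), is contained in {z : dist(z,E) ≤ d̄}, and satisfies L_χ(V_E + μV_K)(z) < 0 on its boundary. -/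

import Mathlib

/-- Lyapunov-based construction of the enlarged set ℰ: with converse
Lyapunov functions V_K, V_E decaying along χ and a class-𝒦∞ lower bound α, the set
ℰ = {V_E + μ V_K < α(d̄)} with μ = α(d̄)/(2 v_E) contains closure(E), is contained in
the d̄-neighborhood of E, and the Lie derivative of V_E + μ V_K is negative on ∂ℰ. -/
theorem stmt_11 (m : ℕ)
    (χ : EuclideanSpace ℝ (Fin m) → EuclideanSpace ℝ (Fin m)) (hχ : ContDiff ℝ 1 χ)
    (E : Set (EuclideanSpace ℝ (Fin m))) (hEo : IsOpen E)
    (hEb : Bornology.IsBounded E)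
    (K₀ : Set (EuclideanSpace ℝ (Fin m))) (hKc : IsCompact K₀) (hKE : K₀ ⊆ E)
    (VK VE : EuclideanSpace ℝ (Fin m) → ℝ)
    (hVKC : ContDiff ℝ 1 VK) (hVEC : ContDiff ℝ 1 VE)
    (hVKnn : ∀ z, 0 ≤ VK z) (hVEnn : ∀ z, 0 ≤ VE z)
    (hVKproper : Filter.Tendsto VK (Filter.cocompact _) Filter.atTop)
    (hVEproper : Filter.Tendsto VE (Filter.cocompact _) Filter.atTop)
    (α : ℝ → ℝ) (hαc : Continuous α) (hαmono : StrictMonoOn α (Set.Ici 0))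
    (hα0 : α 0 = 0) (hαtop : Filter.Tendsto α Filter.atTop Filter.atTop)
    (hVKlb : ∀ z, α (Metric.infDist z K₀) ≤ VK z) (hVK0 : ∀ z ∈ K₀, VK z = 0)
    (hVElb : ∀ z, α (Metric.infDist z E) ≤ VE z) (hVE0 : ∀ z ∈ E, VE z = 0)
    (hVKdec : ∀ z, fderiv ℝ VK z (χ z) ≤ -VK z)
    (hVEdec : ∀ z, fderiv ℝ VE z (χ z) ≤ -VE z)
    (d : ℝ) (hd : 0 < d)
    (vE μ : ℝ) (hvE : vE = sSup (VK '' {z | Metric.infDist z E ≤ d}))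
    (hμ : μ = α d / (2 * vE)) :
    closure E ⊆ {z | VE z + μ * VK z < α d} ∧
    {z | VE z + μ * VK z < α d} ⊆ {z | Metric.infDist z E ≤ d} ∧
    ∀ z ∈ frontier {z | VE z + μ * VK z < α d},
      fderiv ℝ (fun z => VE z + μ * VK z) z (χ z) < 0 := by

  have hαd : 0 < α d := by
    have := hαmono (Set.mem_Ici.mpr le_rfl) (Set.mem_Ici.mpr hd.le) hd
    rwa [hα0] at this
  have hvEnn : 0 ≤ vE := by
    rw [hvE]
    apply Real.sSup_nonneg
    rintro x ⟨z, _, rfl⟩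
    exact hVKnn z
  have hμnn : 0 ≤ μ := by
    rw [hμ]
    positivity
  have hdVE : ∀ z, DifferentiableAt ℝ VE z := fun z =>
    (hVEC.differentiable one_ne_zero).differentiableAt
  have hdVK : ∀ z, DifferentiableAt ℝ VK z := fun z =>
    (hVKC.differentiable one_ne_zero).differentiableAt
  refine ⟨?_, ?_, ?_⟩
  · intro z hz
    have hEne : E.Nonempty := by
      rcases E.eq_empty_or_nonempty with h | h
      · rw [h, closure_empty] at hz; exact absurd hz (Set.notMem_empty z)
      · exact h
    have hVEz : VE z = 0 := by
      have : closure E ⊆ {w | VE w = 0} :=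
        closure_minimal (fun w hw => hVE0 w hw)
          (isClosed_eq hVEC.continuous continuous_const)
      exact this hz
    have hzS : Metric.infDist z E ≤ d := by
      have : Metric.infDist z E = 0 := Metric.infDist_zero_of_mem_closure hz
      linarith
    -- compactness of S and bound VK z ≤ vE
    have hSc : IsCompact {w | Metric.infDist w E ≤ d} := by
      have hclosed : IsClosed {w | Metric.infDist w E ≤ d} :=
        isClosed_le (Metric.continuous_infDist_pt E) continuous_const
      have hbd : Bornology.IsBounded {w | Metric.infDist w E ≤ d} := by
        obtain ⟨R, hRpos, hR⟩ := hEb.subset_closedBall_lt 0 0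
        apply Bornology.IsBounded.subset (Metric.isBounded_closedBall
          (x := (0 : EuclideanSpace ℝ (Fin m))) (r := d + 1 + R))
        intro w hw
        have hlt : Metric.infDist w E < d + 1 := lt_of_le_of_lt hw (by linarith)
        obtain ⟨y, hyE, hy⟩ := (Metric.infDist_lt_iff hEne).mp hlt
        have hyc : dist y 0 ≤ R := hR hyE
        have := dist_triangle w y 0
        simp only [Metric.mem_closedBall]
        linarith
      exact Metric.isCompact_of_isClosed_isBounded hclosed hbd
    have hbdd : BddAbove (VK '' {w | Metric.infDist w E ≤ d}) :=
      (hSc.image hVKC.continuous).bddAbove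
    have hle : VK z ≤ vE := by
      rw [hvE]
      exact le_csSup hbdd ⟨z, hzS, rfl⟩
    rcases eq_or_lt_of_le hvEnn with h0 | h0
    · have : VK z = 0 := le_antisymm (h0 ▸ hle) (hVKnn z)
      simp only [Set.mem_setOf_eq, hVEz, this]
      linarith
    · have h1 : μ * VK z ≤ μ * vE := mul_le_mul_of_nonneg_left hle hμnn
      have h2 : μ * vE = α d / 2 := by
        rw [hμ]; field_simp
      simp only [Set.mem_setOf_eq, hVEz]
      linarith
  · intro z hz
    simp only [Set.mem_setOf_eq] at hz ⊢
    by_contra h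
    push_neg at h
    have h1 : α d < α (Metric.infDist z E) :=
      hαmono (Set.mem_Ici.mpr hd.le) (Set.mem_Ici.mpr Metric.infDist_nonneg) h
    have h2 := hVElb z
    have h3 : 0 ≤ μ * VK z := mul_nonneg hμnn (hVKnn z)
    linarith
  · intro z hz
    have heq : VE z + μ * VK z = α d := by
      have := frontier_lt_subset_eq
        (hVEC.continuous.add (continuous_const.mul hVKC.continuous))
        continuous_const hz
      simpa using this
    have hfd : fderiv ℝ (fun z => VE z + μ * VK z) z
        = fderiv ℝ VE z + μ • fderiv ℝ VK z := by
      rw [show (fun z => VE z + μ * VK z) = VE + fun y => μ * VK y from rfl,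
        fderiv_add (hdVE z) ((hdVK z).const_mul μ), fderiv_const_mul (hdVK z)]
    rw [hfd]
    have h1 := hVEdec z
    have h2 : μ * fderiv ℝ VK z (χ z) ≤ μ * (-VK z) :=
      mul_le_mul_of_nonneg_left (hVKdec z) hμnn
    simp only [ContinuousLinearMap.add_apply, ContinuousLinearMap.smul_apply,
      smul_eq_mul]
    nlinarith
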